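/- arXiv:math/0106023 — 2 statements merged into one kernel-verified Lean document; each statement's English description precedes it below -/
import Mathlib

section
/- Let E be a Banach space with a Schauder basis {e_n} and let Σ be a countable set. Let τ be a mapping defined on the family of all block subspaces of E (with respect to {e_n}) with values in the powerset of Σ, which is increasing with respect to the quasi-order ≤ and inclusion, i.e. for all block subspaces N, M, if N ≤ M then τ(N) ⊆ τ(M). Then there exists a block subspace M which is stabilizing for τ, i.e. τ(L) = τ(M) for every block subspace L with L ⊆ M. -/
open Filter Topology

/-- Two sequences of vectors are `c`-equivalent: the natural map between their spans
distorts norms of finite linear combinations by at most a factor `c`. -/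
def SeqEquiv {E F : Type*} [NormedAddCommGroup E] [NormedSpace ℝ E]
    [NormedAddCommGroup F] [NormedSpace ℝ F]
    (c : ℝ) (x : ℕ → E) (y : ℕ → F) : Prop :=
  ∀ (s : Finset ℕ) (a : ℕ → ℝ),
    (1 / c) * ‖∑ i ∈ s, a i • x i‖ ≤ ‖∑ i ∈ s, a i • y i‖ ∧
    ‖∑ i ∈ s, a i • y i‖ ≤ c * ‖∑ i ∈ s, a i • x i‖

/-- A basic sequence: nonzero vectors whose partial-sum projections are uniformly bounded,
i.e. a Schauder basis of its closed linear span. -/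
def IsBasicSeq {E : Type*} [NormedAddCommGroup E] [NormedSpace ℝ E] (x : ℕ → E) : Prop :=
  (∀ n, x n ≠ 0) ∧
  ∃ K : ℝ, 1 ≤ K ∧ ∀ (a : ℕ → ℝ) (m n : ℕ), m ≤ n →
    ‖∑ i ∈ Finset.range m, a i • x i‖ ≤ K * ‖∑ i ∈ Finset.range n, a i • x i‖

/-- An unconditional basic sequence. -/
def IsUnconditionalSeq {E : Type*} [NormedAddCommGroup E] [NormedSpace ℝ E]
    (x : ℕ → E) : Prop :=
  IsBasicSeq x ∧
  ∃ K : ℝ, 0 < K ∧ ∀ (s : Finset ℕ) (a ε : ℕ → ℝ), (∀ i, ε i = 1 ∨ ε i = -1) →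
    ‖∑ i ∈ s, (ε i * a i) • x i‖ ≤ K * ‖∑ i ∈ s, a i • x i‖

/-- A `C`-subsymmetric sequence: an unconditional basic sequence that is `C`-equivalent
to each of its subsequences. -/
def IsSubsymmetric {E : Type*} [NormedAddCommGroup E] [NormedSpace ℝ E]
    (C : ℝ) (x : ℕ → E) : Prop :=
  IsUnconditionalSeq x ∧ ∀ φ : ℕ → ℕ, StrictMono φ → SeqEquiv C x (x ∘ φ)

/-- A Schauder basis of `E`: biorthogonal system whose partial sums of the expansion of
every vector converge to that vector. -/
structure SchauderBasisSeq (E : Type*) [NormedAddCommGroup E] [NormedSpace ℝ E] where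
  e : ℕ → E
  coord : ℕ → E →L[ℝ] ℝ
  biorth : ∀ i j, coord i (e j) = if i = j then (1 : ℝ) else 0
  expand : ∀ x : E,
    Filter.Tendsto (fun n => ∑ i ∈ Finset.range n, coord i x • e i) atTop (𝓝 x)

/-- A block sequence with respect to a Schauder basis: nonzero, finitely supported
vectors with successive supports. -/
def IsBlockSeq {E : Type*} [NormedAddCommGroup E] [NormedSpace ℝ E]
    (b : SchauderBasisSeq E) (x : ℕ → E) : Prop :=
  (∀ n, x n ≠ 0) ∧
  (∀ n, (Function.support fun i => b.coord i (x n)).Finite) ∧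
  ∀ m n, m < n → ∀ i ∈ Function.support (fun i => b.coord i (x m)),
    ∀ j ∈ Function.support (fun j => b.coord j (x n)), i < j

/-- A block subspace: the closed linear span of a block sequence. -/
def IsBlockSubspace {E : Type*} [NormedAddCommGroup E] [NormedSpace ℝ E]
    (b : SchauderBasisSeq E) (M : Submodule ℝ E) : Prop :=
  ∃ x : ℕ → E, IsBlockSeq b x ∧ M = (Submodule.span ℝ (Set.range x)).topologicalClosure

/-- An infinite-dimensional closed subspace. -/
def InfDimClosed {E : Type*} [NormedAddCommGroup E] [NormedSpace ℝ E]
    (M : Submodule ℝ E) : Prop :=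
  IsClosed (M : Set E) ∧ ¬ FiniteDimensional ℝ M

/-- The quasi-order on subspaces: `L ≤ M` iff `L ⊆ M + F` for some finite-dimensional `F`. -/
def SubspaceLE {E : Type*} [NormedAddCommGroup E] [NormedSpace ℝ E]
    (L M : Submodule ℝ E) : Prop :=
  ∃ F : Submodule ℝ E, FiniteDimensional ℝ F ∧ L ≤ M ⊔ F

/-- The equivalence relation `≐` induced by the quasi-order `SubspaceLE`. -/
def SubspaceEquiv {E : Type*} [NormedAddCommGroup E] [NormedSpace ℝ E]
    (L M : Submodule ℝ E) : Prop :=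
  SubspaceLE L M ∧ SubspaceLE M L

/-- Two normed spaces are `c`-isomorphic: a linear isomorphism with
`(1/c)‖v‖ ≤ ‖Tv‖ ≤ c‖v‖`. -/
def IsoWithConst (c : ℝ) (X Y : Type*) [NormedAddCommGroup X] [NormedSpace ℝ X]
    [NormedAddCommGroup Y] [NormedSpace ℝ Y] : Prop :=
  ∃ T : X ≃ₗ[ℝ] Y, ∀ v : X, (1 / c) * ‖v‖ ≤ ‖T v‖ ∧ ‖T v‖ ≤ c * ‖v‖

/-- A `c`-minimal Banach space: every infinite-dimensional closed subspace contains a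
further infinite-dimensional closed subspace `c`-isomorphic to the whole space. -/
def CMinimalSpace (c : ℝ) (X : Type*) [NormedAddCommGroup X] [NormedSpace ℝ X] : Prop :=
  ∀ L : Submodule ℝ X, InfDimClosed L →
    ∃ N : Submodule ℝ X, N ≤ L ∧ InfDimClosed N ∧ IsoWithConst c ↥N X

/-- A minimal Banach space: every infinite-dimensional closed subspace contains a
further infinite-dimensional closed subspace isomorphic to the whole space. -/
def MinimalSpace (X : Type*) [NormedAddCommGroup X] [NormedSpace ℝ X] : Prop :=
  ∀ L : Submodule ℝ X, InfDimClosed L →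
    ∃ N : Submodule ℝ X, N ≤ L ∧ InfDimClosed N ∧ Nonempty (↥N ≃L[ℝ] X)
section StabilizingAux

variable {E : Type*} [NormedAddCommGroup E] [NormedSpace ℝ E]

lemma sb_eq_zero_of_coord (b : SchauderBasisSeq E) {x : E} (h : ∀ i, b.coord i x = 0) :
    x = 0 := by
  have h2 := b.expand x
  simp only [h, zero_smul, Finset.sum_const_zero] at h2
  exact tendsto_nhds_unique h2 tendsto_const_nhds

lemma sb_exists_coord_ne_zero (b : SchauderBasisSeq E) {x : E} (hx : x ≠ 0) :
    ∃ i, b.coord i x ≠ 0 := by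
  by_contra h
  push_neg at h
  exact hx (sb_eq_zero_of_coord b h)

lemma sb_le_of_coord_ne_zero (b : SchauderBasisSeq E) {x : ℕ → E} (hx : IsBlockSeq b x) :
    ∀ n i, b.coord i (x n) ≠ 0 → n ≤ i := by
  intro n
  induction n with
  | zero => intro i _; exact Nat.zero_le i
  | succ n ih =>
    intro i hi
    obtain ⟨j, hj⟩ := sb_exists_coord_ne_zero b (hx.1 n)
    have h1 : n ≤ j := ih j hj
    have h2 : j < i := hx.2.2 n (n+1) (Nat.lt_succ_self n) j
      (Function.mem_support.2 hj) i (Function.mem_support.2 hi)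
    omega

lemma sb_coord_eq_zero (b : SchauderBasisSeq E) {x : ℕ → E} (hx : IsBlockSeq b x)
    {m n i : ℕ} (hmn : m ≠ n) (hi : b.coord i (x m) ≠ 0) : b.coord i (x n) = 0 := by
  by_contra h
  rcases lt_or_gt_of_ne hmn with h' | h'
  · exact lt_irrefl i
      (hx.2.2 m n h' i (Function.mem_support.2 hi) i (Function.mem_support.2 h))
  · exact lt_irrefl i
      (hx.2.2 n m h' i (Function.mem_support.2 h) i (Function.mem_support.2 hi))

lemma sb_coord_combo (b : SchauderBasisSeq E) (x : ℕ → E) {ι : Type*} (s : Finset ι)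
    (φ : ι → ℕ) (c : ι → ℝ) (i : ℕ) :
    b.coord i (∑ j ∈ s, c j • x (φ j)) = ∑ j ∈ s, c j * b.coord i (x (φ j)) := by
  rw [map_sum]
  simp [smul_eq_mul]

lemma sb_coord_combo_eq (b : SchauderBasisSeq E) {x : ℕ → E} (hx : IsBlockSeq b x)
    {ι : Type*} {s : Finset ι} {φ : ι → ℕ} (c : ι → ℝ) {j₀ : ι} (hj₀ : j₀ ∈ s)
    (hphi : ∀ j ∈ s, j ≠ j₀ → φ j ≠ φ j₀) {i : ℕ} (hi : b.coord i (x (φ j₀)) ≠ 0) :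
    b.coord i (∑ j ∈ s, c j • x (φ j)) = c j₀ * b.coord i (x (φ j₀)) := by
  rw [sb_coord_combo]
  refine Finset.sum_eq_single_of_mem j₀ hj₀ ?_
  intro j hj hne
  rw [sb_coord_eq_zero b hx (Ne.symm (hphi j hj hne)) hi, mul_zero]

lemma sb_combo_ne_zero (b : SchauderBasisSeq E) {x : ℕ → E} (hx : IsBlockSeq b x)
    {ι : Type*} {s : Finset ι} {φ : ι → ℕ} {c : ι → ℝ} {j₀ : ι} (hj₀ : j₀ ∈ s)
    (hphi : ∀ j ∈ s, j ≠ j₀ → φ j ≠ φ j₀) (hc : c j₀ ≠ 0) :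
    (∑ j ∈ s, c j • x (φ j)) ≠ 0 := by
  obtain ⟨i, hi⟩ := sb_exists_coord_ne_zero b (hx.1 (φ j₀))
  intro h
  have h2 := sb_coord_combo_eq b hx c hj₀ hphi hi
  rw [h, map_zero] at h2
  exact hc ((mul_eq_zero.1 h2.symm).resolve_right hi)

lemma sb_coord_combo_support (b : SchauderBasisSeq E) (x : ℕ → E) {ι : Type*}
    {s : Finset ι} {φ : ι → ℕ} {c : ι → ℝ} {i : ℕ}
    (h : b.coord i (∑ j ∈ s, c j • x (φ j)) ≠ 0) : ∃ j ∈ s, b.coord i (x (φ j)) ≠ 0 := by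
  by_contra hno
  push_neg at hno
  apply h
  rw [sb_coord_combo]
  exact Finset.sum_eq_zero fun j hj => by rw [hno j hj, mul_zero]

lemma sb_isBlockSeq_of_consecutive (b : SchauderBasisSeq E) {w : ℕ → E}
    (h0 : ∀ n, w n ≠ 0)
    (hfin : ∀ n, (Function.support fun i => b.coord i (w n)).Finite)
    (hcons : ∀ n i, b.coord i (w n) ≠ 0 → ∀ j, b.coord j (w (n+1)) ≠ 0 → i < j) :
    IsBlockSeq b w := by
  refine ⟨h0, hfin, ?_⟩
  intro m n
  induction n with
  | zero => omega
  | succ n ih =>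
    intro hmn i hi j hj
    rcases Nat.lt_succ_iff_lt_or_eq.1 hmn with h | h
    · obtain ⟨k, hk⟩ := sb_exists_coord_ne_zero b (h0 n)
      exact lt_trans (ih h i hi k (Function.mem_support.2 hk))
        (hcons n k hk j (Function.mem_support.1 hj))
    · subst h
      exact hcons m i (Function.mem_support.1 hi) j (Function.mem_support.1 hj)

lemma sb_isBlockSeq_e (b : SchauderBasisSeq E) : IsBlockSeq b b.e := by
  have hco : ∀ i n : ℕ, b.coord i (b.e n) ≠ 0 → i = n := by
    intro i n h
    by_contra hne
    rw [b.biorth, if_neg hne] at h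
    exact h rfl
  refine ⟨?_, ?_, ?_⟩
  · intro n h
    have h2 := b.biorth n n
    rw [h, map_zero] at h2
    simp at h2
  · intro n
    exact Set.Finite.subset (Set.finite_singleton n) fun i hi =>
      hco i n (Function.mem_support.1 hi)
  · intro m n hmn i hi j hj
    rw [hco i m (Function.mem_support.1 hi), hco j n (Function.mem_support.1 hj)]
    exact hmn

lemma sb_blockSubspace_isClosed (b : SchauderBasisSeq E) {M : Submodule ℝ E}
    (hM : IsBlockSubspace b M) : IsClosed (M : Set E) := by
  obtain ⟨x, -, rfl⟩ := hM
  exact Submodule.isClosed_topologicalClosure _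

lemma sb_isClosed_sup_fd [CompleteSpace E] (S F : Submodule ℝ E)
    (hS : IsClosed (S : Set E)) (hF : FiniteDimensional ℝ F) :
    IsClosed ((S ⊔ F : Submodule ℝ E) : Set E) := by
  haveI : IsClosed (S : Set E) := hS
  have hcont : Continuous S.mkQ := by
    have hl : LipschitzWith 1 S.mkQ := by
      apply LipschitzWith.of_dist_le_mul
      intro a c
      rw [dist_eq_norm, dist_eq_norm, ← map_sub]
      simpa using Submodule.Quotient.norm_mk_le S (a - c)
    exact hl.continuous
  haveI : FiniteDimensional ℝ (F.map S.mkQ) := Module.Finite.map F S.mkQ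
  have hclosed : IsClosed ((F.map S.mkQ : Submodule ℝ (E ⧸ S)) : Set (E ⧸ S)) :=
    Submodule.closed_of_finiteDimensional _
  have heq : ((S ⊔ F : Submodule ℝ E) : Set E) = S.mkQ ⁻¹' (F.map S.mkQ : Set (E ⧸ S)) := by
    rw [← Submodule.comap_map_mkQ S F]
    rfl
  rw [heq]
  exact hclosed.preimage hcont

end StabilizingAux
section StabilizingAux2

variable {E : Type*} [NormedAddCommGroup E] [NormedSpace ℝ E] [CompleteSpace E]

lemma sb_exists_block_le_le (b : SchauderBasisSeq E) (L M : Submodule ℝ E)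
    (hL : IsBlockSubspace b L) (hM : IsBlockSubspace b M) (h : SubspaceLE L M) :
    ∃ N : Submodule ℝ E, IsBlockSubspace b N ∧ N ≤ L ∧ N ≤ M := by
  have hMc : IsClosed (M : Set E) := sb_blockSubspace_isClosed b hM
  obtain ⟨u, hu, rfl⟩ := hL
  obtain ⟨F, hF, hLF⟩ := h
  haveI : IsClosed (M : Set E) := hMc
  haveI : FiniteDimensional ℝ F := hF
  set d := Module.finrank ℝ F with hd
  set π := M.mkQ with hπ
  have humem : ∀ n, u n ∈ (Submodule.span ℝ (Set.range u)).topologicalClosure := fun n =>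
    Submodule.le_topologicalClosure _ (Submodule.subset_span ⟨n, rfl⟩)
  have hmem : ∀ n : ℕ, π (u n) ∈ F.map π := by
    intro n
    have h1 : u n ∈ M ⊔ F := hLF (humem n)
    obtain ⟨m, hm, f, hf, hmf⟩ := Submodule.mem_sup.1 h1
    have h2 : π (u n) = π f := by
      rw [← hmf, map_add]
      have h3 : π m = 0 := by
        rw [hπ, Submodule.mkQ_apply, Submodule.Quotient.mk_eq_zero]
        exact hm
      rw [h3, zero_add]
    rw [h2]
    exact Submodule.mem_map_of_mem hf
  haveI : FiniteDimensional ℝ (F.map π) := Module.Finite.map F π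
  have key : ∀ k : ℕ, ∃ g : Fin (d+1) → ℝ,
      (∑ j : Fin (d+1), g j • u (k*(d+1) + (j : ℕ))) ∈ M ∧ ∃ j, g j ≠ 0 := by
    intro k
    set v : Fin (d+1) → (F.map π) := fun j => ⟨π (u (k*(d+1)+(j:ℕ))), hmem _⟩ with hv
    have hnli : ¬ LinearIndependent ℝ v := by
      intro hli
      have h1 := hli.fintype_card_le_finrank
      have h2 : Module.finrank ℝ (F.map π) ≤ d := Submodule.finrank_map_le π F
      rw [Fintype.card_fin] at h1
      omega
    rw [Fintype.not_linearIndependent_iff] at hnli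
    obtain ⟨g, hg, j0, hj0⟩ := hnli
    refine ⟨g, ?_, j0, hj0⟩
    have h1 : π (∑ j : Fin (d+1), g j • u (k*(d+1)+(j:ℕ))) = 0 := by
      have h2 : ((∑ j : Fin (d+1), g j • v j : F.map π) : E ⧸ M) = 0 := by
        rw [hg]; rfl
      rw [map_sum]
      simpa [hv] using h2
    rw [hπ, Submodule.mkQ_apply, Submodule.Quotient.mk_eq_zero] at h1
    exact h1
  choose g hgM hgne using key
  set w : ℕ → E := fun k => ∑ j : Fin (d+1), g k j • u (k*(d+1)+(j:ℕ)) with hw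
  have hφinj : ∀ k : ℕ, ∀ j j' : Fin (d+1), (k*(d+1)+(j:ℕ)) = (k*(d+1)+(j':ℕ)) → j = j' :=
    fun k j j' h => Fin.ext (by omega)
  have hwne : ∀ k, w k ≠ 0 := by
    intro k
    obtain ⟨j0, hj0⟩ := hgne k
    exact sb_combo_ne_zero b hu (Finset.mem_univ j0)
      (fun j _ hne he => hne (hφinj k j j0 he)) hj0
  have hwfin : ∀ k, (Function.support fun i => b.coord i (w k)).Finite := by
    intro k
    apply Set.Finite.subset (Set.finite_iUnion fun j : Fin (d+1) =>
      hu.2.1 (k*(d+1)+(j:ℕ)))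
    intro i hi
    obtain ⟨j, -, hj⟩ := sb_coord_combo_support b u (Function.mem_support.1 hi)
    exact Set.mem_iUnion.2 ⟨j, Function.mem_support.2 hj⟩
  have hwcons : ∀ k i, b.coord i (w k) ≠ 0 → ∀ j, b.coord j (w (k+1)) ≠ 0 → i < j := by
    intro k i hi j hj
    obtain ⟨j1, -, hj1⟩ := sb_coord_combo_support b u hi
    obtain ⟨j2, -, hj2⟩ := sb_coord_combo_support b u hj
    refine hu.2.2 (k*(d+1)+(j1:ℕ)) ((k+1)*(d+1)+(j2:ℕ)) ?_ i
      (Function.mem_support.2 hj1) j (Function.mem_support.2 hj2)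
    have hA : (k+1)*(d+1) = k*(d+1) + (d+1) := by ring
    have hB : (j1 : ℕ) < d + 1 := j1.isLt
    linarith
  have hwblock : IsBlockSeq b w := sb_isBlockSeq_of_consecutive b hwne hwfin hwcons
  refine ⟨(Submodule.span ℝ (Set.range w)).topologicalClosure, ⟨w, hwblock, rfl⟩, ?_, ?_⟩
  · apply Submodule.topologicalClosure_minimal
    · rw [Submodule.span_le]
      rintro - ⟨k, rfl⟩
      exact Submodule.sum_mem _ fun j _ => Submodule.smul_mem _ _ (humem _)
    · exact Submodule.isClosed_topologicalClosure _
  · apply Submodule.topologicalClosure_minimal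
    · rw [Submodule.span_le]
      rintro - ⟨k, rfl⟩
      exact hgM k
    · exact hMc

lemma sb_exists_diagonal (b : SchauderBasisSeq E) (Ms : ℕ → Submodule ℝ E)
    (hblock : ∀ k, IsBlockSubspace b (Ms k)) (hdec : ∀ k, Ms (k+1) ≤ Ms k) :
    ∃ M, IsBlockSubspace b M ∧ ∀ k, SubspaceLE M (Ms k) := by
  choose x hx hMs using hblock
  set idx : ℕ → ℕ := fun k =>
    Nat.rec 0 (fun k' ih => ((hx k').2.1 ih).toFinset.sup id + 1) k with hidx
  set y : ℕ → E := fun k => x k (idx k) with hy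
  have hidxsucc : ∀ k, idx (k+1) = ((hx k).2.1 (idx k)).toFinset.sup id + 1 := fun k => rfl
  have hyne : ∀ k, y k ≠ 0 := fun k => (hx k).1 _
  have hyfin : ∀ k, (Function.support fun i => b.coord i (y k)).Finite := fun k =>
    (hx k).2.1 _
  have hycons : ∀ k i, b.coord i (y k) ≠ 0 → ∀ j, b.coord j (y (k+1)) ≠ 0 → i < j := by
    intro k i hi j hj
    have h1 : i ≤ ((hx k).2.1 (idx k)).toFinset.sup id := by
      have h2 : i ∈ ((hx k).2.1 (idx k)).toFinset :=
        (Set.Finite.mem_toFinset _).2 (Function.mem_support.2 hi)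
      exact Finset.le_sup (f := id) h2
    have h2 : idx (k+1) ≤ j := sb_le_of_coord_ne_zero b (hx (k+1)) (idx (k+1)) j hj
    rw [hidxsucc k] at h2
    omega
  have hyblock := sb_isBlockSeq_of_consecutive b hyne hyfin hycons
  have hymem : ∀ k, y k ∈ Ms k := fun k =>
    (hMs k) ▸ Submodule.le_topologicalClosure _ (Submodule.subset_span ⟨idx k, rfl⟩)
  have hchain : ∀ k j, k ≤ j → Ms j ≤ Ms k := by
    intro k j hkj
    induction hkj with
    | refl => exact le_rfl
    | step _ ih => exact le_trans (hdec _) ih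
  refine ⟨(Submodule.span ℝ (Set.range y)).topologicalClosure, ⟨y, hyblock, rfl⟩, ?_⟩
  intro k
  have hFfd : FiniteDimensional ℝ (Submodule.span ℝ (y '' Set.Iio k)) :=
    FiniteDimensional.span_of_finite ℝ ((Set.finite_Iio k).image y)
  refine ⟨Submodule.span ℝ (y '' Set.Iio k), hFfd, ?_⟩
  apply Submodule.topologicalClosure_minimal
  · rw [Submodule.span_le]
    rintro - ⟨j, rfl⟩
    by_cases hjk : j < k
    · exact Submodule.mem_sup_right (Submodule.subset_span ⟨j, hjk, rfl⟩)
    · exact Submodule.mem_sup_left (hchain k j (le_of_not_gt hjk) (hymem j))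
  · exact sb_isClosed_sup_fd _ _ (sb_blockSubspace_isClosed b ⟨x k, hx k, hMs k⟩) hFfd

end StabilizingAux2
section StabilizingChain

variable {E : Type*} [NormedAddCommGroup E] [NormedSpace ℝ E]

open scoped Classical in
noncomputable def sbChainStep (b : SchauderBasisSeq E) {σ : Type*}
    (τ : Submodule ℝ E → Set σ) (f : ℕ → Option σ) (k : ℕ)
    (p : {N : Submodule ℝ E // IsBlockSubspace b N}) :
    {N : Submodule ℝ E // IsBlockSubspace b N} :=
  if h : ∃ N, IsBlockSubspace b N ∧ N ≤ p.1 ∧ ∀ s, f k = some s → s ∉ τ N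
  then ⟨h.choose, h.choose_spec.1⟩ else p

noncomputable def sbChain (b : SchauderBasisSeq E) {σ : Type*}
    (τ : Submodule ℝ E → Set σ) (f : ℕ → Option σ) :
    ℕ → {N : Submodule ℝ E // IsBlockSubspace b N}
  | 0 => ⟨_, ⟨b.e, sb_isBlockSeq_e b, rfl⟩⟩
  | (k+1) => sbChainStep b τ f k (sbChain b τ f k)

lemma sbChainStep_le (b : SchauderBasisSeq E) {σ : Type*} (τ : Submodule ℝ E → Set σ)
    (f : ℕ → Option σ) (k : ℕ) (p : {N : Submodule ℝ E // IsBlockSubspace b N}) :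
    (sbChainStep b τ f k p).1 ≤ p.1 := by
  unfold sbChainStep
  split_ifs with h
  · exact h.choose_spec.2.1
  · exact le_rfl

lemma sbChainStep_avoid (b : SchauderBasisSeq E) {σ : Type*} (τ : Submodule ℝ E → Set σ)
    (f : ℕ → Option σ) (k : ℕ) (p : {N : Submodule ℝ E // IsBlockSubspace b N})
    (h : ∃ N, IsBlockSubspace b N ∧ N ≤ p.1 ∧ ∀ s, f k = some s → s ∉ τ N) :
    ∀ s, f k = some s → s ∉ τ (sbChainStep b τ f k p).1 := by
  unfold sbChainStep
  rw [dif_pos h]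
  exact h.choose_spec.2.2

end StabilizingChain

/-- The stabilizing lemma for increasing maps on the family of block
subspaces of a Banach space with a Schauder basis. -/
theorem stabilizing_lemma_block
    {E : Type*} [NormedAddCommGroup E] [NormedSpace ℝ E] [CompleteSpace E]
    (b : SchauderBasisSeq E)
    {σ : Type*} [Countable σ]
    (τ : Submodule ℝ E → Set σ)
    (hmono : ∀ N M : Submodule ℝ E, IsBlockSubspace b N → IsBlockSubspace b M →
      SubspaceLE N M → τ N ⊆ τ M) :
    ∃ M : Submodule ℝ E, IsBlockSubspace b M ∧
      ∀ L : Submodule ℝ E, IsBlockSubspace b L → L ≤ M → τ L = τ M := by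
  classical
  obtain ⟨f, hf⟩ := exists_surjective_nat (Option σ)
  have hCb : ∀ k, IsBlockSubspace b (sbChain b τ f k).1 := fun k => (sbChain b τ f k).2
  have hCdec : ∀ k, (sbChain b τ f (k+1)).1 ≤ (sbChain b τ f k).1 := fun k =>
    sbChainStep_le b τ f k (sbChain b τ f k)
  obtain ⟨M, hMb, hMle⟩ := sb_exists_diagonal b (fun k => (sbChain b τ f k).1) hCb hCdec
  refine ⟨M, hMb, ?_⟩
  intro L hLb hLM
  have hbotfd : FiniteDimensional ℝ (⊥ : Submodule ℝ E) := inferInstance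
  apply Set.Subset.antisymm
  · exact hmono L M hLb hMb ⟨⊥, hbotfd, by rw [sup_bot_eq]; exact hLM⟩
  · intro s hs
    obtain ⟨k, hk⟩ := hf (some s)
    by_cases h : ∃ N, IsBlockSubspace b N ∧ N ≤ (sbChain b τ f k).1 ∧
        ∀ s', f k = some s' → s' ∉ τ N
    · exfalso
      have h1 : s ∉ τ (sbChain b τ f (k+1)).1 :=
        sbChainStep_avoid b τ f k (sbChain b τ f k) h s hk
      exact h1 (hmono M (sbChain b τ f (k+1)).1 hMb (hCb (k+1)) (hMle (k+1)) hs)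
    · push_neg at h
      obtain ⟨F, hF, hMF⟩ := hMle k
      have hLk : SubspaceLE L (sbChain b τ f k).1 := ⟨F, hF, le_trans hLM hMF⟩
      obtain ⟨N, hNb, hNL, hNk⟩ :=
        sb_exists_block_le_le b L (sbChain b τ f k).1 hLb (hCb k) hLk
      obtain ⟨s', hs', hs'mem⟩ := h N hNb hNk
      have hss : s' = s := by
        rw [hk] at hs'
        exact (Option.some.inj hs').symm
      subst hss
      exact hmono N L hNb hLb ⟨⊥, hbotfd, by rw [sup_bot_eq]; exact hNL⟩ hs'mem
end

section
/- Let E₀ be a Banach space with a Schauder basis and let c ≥ 1. Suppose every block subspace of E₀ contains an infinite-dimensional closed subspace c-isomorphic to E₀. Then for every δ > 0, every infinite-dimensional closed subspace of E₀ contains an infinite-dimensional closed subspace that is c(1+δ)-isomorphic to E₀; in particular E₀ is c(1+δ)-minimal for every δ > 0. -/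
open Filter Topology

namespace BMAux
variable {E : Type*} [NormedAddCommGroup E] [NormedSpace ℝ E]

noncomputable def proj (b : SchauderBasisSeq E) (n : ℕ) : E →L[ℝ] E :=
  ∑ i ∈ Finset.range n, (b.coord i).smulRight (b.e i)

lemma proj_apply (b : SchauderBasisSeq E) (n : ℕ) (z : E) :
    proj b n z = ∑ i ∈ Finset.range n, b.coord i z • b.e i := by
  simp [proj, ContinuousLinearMap.sum_apply]

lemma coord_proj (b : SchauderBasisSeq E) (i n : ℕ) (z : E) :
    b.coord i (proj b n z) = if i < n then b.coord i z else 0 := by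
  rw [proj_apply, map_sum]
  simp only [map_smul, b.biorth, smul_eq_mul]
  rw [Finset.sum_congr rfl (fun j _ => by rw [mul_ite, mul_one, mul_zero]),
    Finset.sum_ite_eq (Finset.range n) i (fun j => b.coord j z)]
  simp [Finset.mem_range]

lemma proj_proj (b : SchauderBasisSeq E) (m n : ℕ) (z : E) :
    proj b m (proj b n z) = proj b (min m n) z := by
  calc proj b m (proj b n z)
      = ∑ i ∈ Finset.range m, b.coord i (proj b n z) • b.e i := proj_apply _ _ _
    _ = ∑ i ∈ Finset.range m, (if i ∈ Finset.range n then b.coord i z • b.e i else 0) := by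
        refine Finset.sum_congr rfl fun i _ => ?_
        simp only [coord_proj, Finset.mem_range, ite_smul, zero_smul]
    _ = ∑ i ∈ Finset.range m ∩ Finset.range n, b.coord i z • b.e i :=
        Finset.sum_ite_mem _ _ _
    _ = ∑ i ∈ Finset.range (min m n), b.coord i z • b.e i := by
        congr 1
        exact Finset.ext fun i => by simp [Finset.mem_range, lt_min_iff]
    _ = proj b (min m n) z := (proj_apply _ _ _).symm

lemma tendsto_proj (b : SchauderBasisSeq E) (z : E) :
    Tendsto (fun n => proj b n z) atTop (𝓝 z) := by
  simpa only [← proj_apply] using b.expand z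

lemma proj_bound [CompleteSpace E] (b : SchauderBasisSeq E) :
    ∃ C : ℝ, 1 ≤ C ∧ ∀ n, ‖proj b n‖ ≤ C := by
  obtain ⟨C, hC⟩ := banach_steinhaus (g := fun n => proj b n) (fun z => by
    obtain ⟨M, hM⟩ := ((tendsto_proj b z).norm.bddAbove_range)
    exact ⟨M, fun n => hM ⟨n, rfl⟩⟩)
  exact ⟨max C 1, le_max_right _ _, fun n => (hC n).trans (le_max_left _ _)⟩


lemma exists_step [CompleteSpace E] (b : SchauderBasisSeq E) (L : Submodule ℝ E)
    (hLfd : ¬ FiniteDimensional ℝ L) (n : ℕ) {ε : ℝ} (hε : 0 < ε) :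
    ∃ p : E × ℕ, p.1 ∈ L ∧ ‖p.1‖ = 1 ∧ proj b n p.1 = 0 ∧ n ≤ p.2 ∧
      ‖p.1 - proj b p.2 p.1‖ < ε := by
  classical
  have hker : ∃ v : L, v ≠ 0 ∧ proj b n (v : E) = 0 := by
    by_contra hcon
    push_neg at hcon
    set f : L →ₗ[ℝ] E := (proj b n).toLinearMap.comp L.subtype with hf
    have hinj : Function.Injective f := by
      rw [← LinearMap.ker_eq_bot]
      refine (Submodule.eq_bot_iff _).2 fun v hv => ?_
      by_contra hvne
      exact hcon v hvne (by simpa [hf] using hv)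
    set F : Submodule ℝ E := Submodule.span ℝ (b.e '' Set.Iio n) with hF
    have hFfd : FiniteDimensional ℝ F :=
      FiniteDimensional.span_of_finite ℝ ((Set.finite_Iio n).image _)
    have hmem : ∀ v : L, f v ∈ F := by
      intro v
      have : f v = ∑ i ∈ Finset.range n, b.coord i (v : E) • b.e i := by
        simp [hf, proj_apply]
      rw [this]
      refine Submodule.sum_mem _ fun i hi => Submodule.smul_mem _ _ ?_
      exact Submodule.subset_span ⟨i, Finset.mem_range.1 hi, rfl⟩
    have : FiniteDimensional ℝ L :=
      FiniteDimensional.of_injective (f.codRestrict F hmem)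
        (fun u v huv => hinj (by simpa [LinearMap.codRestrict] using congrArg Subtype.val huv))
    exact hLfd this
  obtain ⟨v, hvne, hvker⟩ := hker
  have hy₀ne : (v : E) ≠ 0 := by simpa using hvne
  set y : E := ‖(v : E)‖⁻¹ • (v : E) with hy
  have hyL : y ∈ L := L.smul_mem _ v.2
  have hynorm : ‖y‖ = 1 := norm_smul_inv_norm hy₀ne
  have hyker : proj b n y = 0 := by rw [hy, map_smul, hvker, smul_zero]
  have := (tendsto_proj b y)
  rw [Metric.tendsto_atTop] at this
  obtain ⟨m₀, hm₀⟩ := this ε hε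
  refine ⟨(y, max n m₀), hyL, hynorm, hyker, le_max_left _ _, ?_⟩
  have := hm₀ (max n m₀) (le_max_right _ _)
  rwa [dist_eq_norm, norm_sub_rev] at this

end BMAux

/-- If every block subspace of a Banach space `E₀` with a Schauder
basis contains an infinite-dimensional closed subspace `c`-isomorphic to `E₀`, then for
every `δ > 0` the space `E₀` is `c(1+δ)`-minimal. -/
theorem block_minimal_implies_minimal
    {E₀ : Type*} [NormedAddCommGroup E₀] [NormedSpace ℝ E₀] [CompleteSpace E₀]
    (b : SchauderBasisSeq E₀)
    (c : ℝ) (hc : 1 ≤ c)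
    (h : ∀ M : Submodule ℝ E₀, IsBlockSubspace b M →
      ∃ N : Submodule ℝ E₀, N ≤ M ∧ InfDimClosed N ∧ IsoWithConst c ↥N E₀) :
    ∀ δ : ℝ, 0 < δ → CMinimalSpace (c * (1 + δ)) E₀ := by

  classical
  intro δ hδ L hL
  obtain ⟨hLc, hLfd⟩ := hL
  obtain ⟨C, hC1, hC⟩ := BMAux.proj_bound b
  have hCpos : (0:ℝ) < C := lt_of_lt_of_le one_pos hC1
  have hcpos : (0:ℝ) < c := lt_of_lt_of_le one_pos hc
  have hδ1 : (0:ℝ) < 1 + δ := by linarith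
  set θ : ℝ := min (1/2) (δ/(1+δ)) with hθdef
  have hθpos : 0 < θ := lt_min (by norm_num) (div_pos hδ hδ1)
  have hθhalf : θ ≤ 1/2 := min_le_left _ _
  have hθδ' : θ ≤ δ/(1+δ) := min_le_right _ _
  have hθδmul : θ * (1+δ) ≤ δ := (le_div_iff₀ hδ1).mp hθδ'
  have key1 : 1 ≤ (1-θ)*(1+δ) := by nlinarith
  have hθδ : θ ≤ δ := by nlinarith
  set ε : ℕ → ℝ := fun k => θ/(8*C)/2/2^k with hεdef
  have hεpos : ∀ k, 0 < ε k := fun k => by rw [hεdef]; positivity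
  have hεle : ∀ k, ε k ≤ 1/2 := by
    intro k
    have h2k : (1:ℝ) ≤ 2^k := one_le_pow₀ (by norm_num)
    have h8C : (8:ℝ) ≤ 8*C := by linarith
    have e1 : ε k ≤ θ/(8*C)/2 := by
      rw [hεdef]
      exact div_le_self (by positivity) h2k
    have e2 : θ/(8*C) ≤ θ := div_le_self hθpos.le (by linarith)
    linarith
  -- the gliding-hump construction
  have step : ∀ n k : ℕ, ∃ p : E₀ × ℕ, p.1 ∈ L ∧ ‖p.1‖ = 1 ∧ BMAux.proj b n p.1 = 0 ∧
      n ≤ p.2 ∧ ‖p.1 - BMAux.proj b p.2 p.1‖ < ε k :=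
    fun n k => BMAux.exists_step b L hLfd n (hεpos k)
  let pick : ℕ → ℕ → E₀ × ℕ := fun n k => (step n k).choose
  have hpick : ∀ n k, (pick n k).1 ∈ L ∧ ‖(pick n k).1‖ = 1 ∧
      BMAux.proj b n (pick n k).1 = 0 ∧ n ≤ (pick n k).2 ∧
      ‖(pick n k).1 - BMAux.proj b (pick n k).2 (pick n k).1‖ < ε k :=
    fun n k => (step n k).choose_spec
  let nn : ℕ → ℕ := fun k => Nat.rec 0 (fun k' ih => (pick ih k').2) k
  let y : ℕ → E₀ := fun k => (pick (nn k) k).1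
  have hnnsucc : ∀ k, nn (k+1) = (pick (nn k) k).2 := fun k => rfl
  have hyL : ∀ k, y k ∈ L := fun k => (hpick _ k).1
  have hynorm : ∀ k, ‖y k‖ = 1 := fun k => (hpick _ k).2.1
  have hyker : ∀ k, BMAux.proj b (nn k) (y k) = 0 := fun k => (hpick _ k).2.2.1
  have hnnle : ∀ k, nn k ≤ nn (k+1) := fun k => (hpick _ k).2.2.2.1
  have hnnmono : Monotone nn := monotone_nat_of_le_succ hnnle
  let x : ℕ → E₀ := fun k => BMAux.proj b (nn (k+1)) (y k)
  have hclose : ∀ k, ‖y k - x k‖ < ε k := fun k => (hpick _ k).2.2.2.2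
  have hxnormge : ∀ k, (1:ℝ)/2 ≤ ‖x k‖ := by
    intro k
    have h1 := norm_sub_norm_le (y k) (x k)
    have := hclose k
    have := hεle k
    rw [hynorm k] at h1
    linarith
  have hxne : ∀ k, x k ≠ 0 := fun k => by
    intro hzero
    have := hxnormge k
    rw [hzero, norm_zero] at this
    linarith
  -- projection identities
  have hproj_x : ∀ k t, BMAux.proj b t (x k) = BMAux.proj b (min t (nn (k+1))) (y k) :=
    fun k t => BMAux.proj_proj b t (nn (k+1)) (y k)
  have hhi : ∀ k t, nn (k+1) ≤ t → BMAux.proj b t (x k) = x k := by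
    intro k t ht
    rw [hproj_x, min_eq_right ht]
  have hlo : ∀ k t, t ≤ nn k → BMAux.proj b t (x k) = 0 := by
    intro k t ht
    rw [hproj_x, min_eq_left (ht.trans (hnnle k))]
    have h1 : BMAux.proj b t (y k) = BMAux.proj b t (BMAux.proj b (nn k) (y k)) := by
      rw [BMAux.proj_proj, min_eq_left ht]
    rw [h1, hyker k, map_zero]
  -- coordinates
  have hcoordlow : ∀ k i, i < nn k → b.coord i (y k) = 0 := by
    intro k i hi
    have h1 := BMAux.coord_proj b i (nn k) (y k)
    rw [hyker k, map_zero, if_pos hi] at h1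
    exact h1.symm
  have hcoordx : ∀ k i, b.coord i (x k) = if i < nn (k+1) then b.coord i (y k) else 0 :=
    fun k i => BMAux.coord_proj b i (nn (k+1)) (y k)
  -- block sequence
  have hsupp : ∀ k i, b.coord i (x k) ≠ 0 → nn k ≤ i ∧ i < nn (k+1) := by
    intro k i hne
    rw [hcoordx] at hne
    by_cases hi : i < nn (k+1)
    · rw [if_pos hi] at hne
      rcases le_or_gt (nn k) i with hge | hlt
      · exact ⟨hge, hi⟩
      · exact absurd (hcoordlow k i hlt) hne
    · rw [if_neg hi] at hne
      exact absurd rfl hne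
  have hblock : IsBlockSeq b x := by
    refine ⟨hxne, fun k => ?_, fun m n hmn i hi j hj => ?_⟩
    · exact (Set.finite_Iio (nn (k+1))).subset fun i hi => (hsupp k i hi).2
    · have h1 := (hsupp m i hi).2
      have h2 := (hsupp n j hj).1
      have h3 : nn (m+1) ≤ nn n := hnnmono hmn
      omega
  -- apply the hypothesis to the block subspace
  obtain ⟨N, hNM, ⟨hNc, hNfd⟩, T₀, hT₀⟩ :=
    h ((Submodule.span ℝ (Set.range x)).topologicalClosure) ⟨x, hblock, rfl⟩
  -- biorthogonal functionals
  have hfk : ∀ k, ∃ f : E₀ →L[ℝ] ℝ, f (x k) = 1 ∧ ‖f‖ ≤ 2 := by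
    intro k
    obtain ⟨g, hg1, hgx⟩ := exists_dual_vector ℝ (x k) (norm_ne_zero_iff.mpr (hxne k))
    have hxknorm : ‖x k‖ ≠ 0 := ne_of_gt (by have := hxnormge k; linarith)
    refine ⟨‖x k‖⁻¹ • g, ?_, ?_⟩
    · rw [ContinuousLinearMap.smul_apply, hgx]
      simp [inv_mul_cancel₀ hxknorm]
    · have hns : ‖‖x k‖⁻¹ • g‖ = ‖‖x k‖⁻¹‖ * ‖g‖ := norm_smul _ g
      rw [hns, hg1, mul_one, norm_inv, norm_norm]
      rw [show (2:ℝ) = ((1:ℝ)/2)⁻¹ by norm_num]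
      exact inv_anti₀ (by norm_num) (hxnormge k)
  choose f hf1 hf2 using hfk
  let g : ℕ → E₀ →L[ℝ] ℝ := fun k =>
    (f k).comp (BMAux.proj b (nn (k+1)) - BMAux.proj b (nn k))
  have hgnorm : ∀ k, ‖g k‖ ≤ 4*C := by
    intro k
    refine (ContinuousLinearMap.opNorm_comp_le _ _).trans ?_
    have h1 : ‖BMAux.proj b (nn (k+1)) - BMAux.proj b (nn k)‖ ≤ 2*C := by
      refine (norm_sub_le _ _).trans ?_
      have := hC (nn (k+1)); have := hC (nn k); linarith
    calc ‖f k‖ * ‖BMAux.proj b (nn (k+1)) - BMAux.proj b (nn k)‖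
        ≤ 2 * (2*C) := by
          exact mul_le_mul (hf2 k) h1 (norm_nonneg _) (by norm_num)
      _ = 4*C := by ring
  have hgx : ∀ k j, g k (x j) = if k = j then 1 else 0 := by
    intro k j
    have hgeq : g k (x j) = f k (BMAux.proj b (nn (k+1)) (x j) - BMAux.proj b (nn k) (x j)) := by
      simp [g, ContinuousLinearMap.comp_apply, ContinuousLinearMap.sub_apply]
    rcases lt_trichotomy k j with hkj | hkj | hkj
    · rw [if_neg hkj.ne]
      rw [hgeq, hlo j _ (hnnmono hkj), hlo j _ ((hnnle k).trans (hnnmono hkj)),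
        sub_zero, map_zero]
    · subst hkj
      rw [if_pos rfl, hgeq, hhi k _ le_rfl, hlo k _ le_rfl, sub_zero, hf1]
    · rw [if_neg (Nat.lt_irrefl j |> fun _ => hkj.ne')]
      have h1 : nn (j+1) ≤ nn k := hnnmono hkj
      rw [hgeq, hhi j _ (h1.trans (hnnle k)), hhi j _ h1, sub_self, map_zero]
  -- the perturbation operator
  let T : ℕ → E₀ →L[ℝ] E₀ := fun k => (g k).smulRight (y k - x k)
  have hTnorm : ∀ k, ‖T k‖ ≤ 4*C * ε k := by
    intro k
    rw [show ‖T k‖ = ‖g k‖ * ‖y k - x k‖ from ContinuousLinearMap.norm_smulRight_apply _ _]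
    exact mul_le_mul (hgnorm k) (hclose k).le (norm_nonneg _) (by positivity)
  have hsumgeo : Summable (fun k => θ/(8*C)/2/2^k) := summable_geometric_two' _
  have hsum4C : Summable (fun k => 4*C * ε k) := by
    simp only [hεdef]
    exact hsumgeo.mul_left _
  have hsumnorm : Summable (fun k => ‖T k‖) :=
    Summable.of_nonneg_of_le (fun k => norm_nonneg _) hTnorm hsum4C
  have hsumT : Summable T := Summable.of_norm hsumnorm
  set D : E₀ →L[ℝ] E₀ := ∑' k, T k with hDdef
  have htsumeps : ∑' k, ε k = θ/(8*C) := tsum_geometric_two' _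
  have hDnorm : ‖D‖ ≤ θ/2 := by
    refine (norm_tsum_le_tsum_norm hsumnorm).trans ?_
    have h1 : ∑' k, ‖T k‖ ≤ ∑' k, 4*C * ε k := Summable.tsum_le_tsum hTnorm hsumnorm hsum4C
    have h2 : ∑' k, 4*C * ε k = 4*C * (θ/(8*C)) := by
      rw [tsum_mul_left, htsumeps]
    have h3 : 4*C * (θ/(8*C)) = θ/2 := by
      field_simp
      ring
    linarith
  have hDx : ∀ j, D (x j) = y j - x j := by
    intro j
    have h1 : D (x j) = ∑' k, T k (x j) :=
      (ContinuousLinearMap.apply ℝ E₀ (x j)).map_tsum hsumT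
    rw [h1]
    have h2 : ∀ k, T k (x j) = if k = j then y j - x j else 0 := by
      intro k
      rw [show T k (x j) = g k (x j) • (y k - x k) from rfl, hgx]
      split
      · next heq => subst heq; rw [one_smul]
      · rw [zero_smul]
    rw [tsum_congr h2, tsum_ite_eq]
  have hDlt : ‖-D‖ < 1 := by
    rw [norm_neg]
    linarith
  set u : (E₀ →L[ℝ] E₀)ˣ := Units.oneSub (-D) hDlt with hudef
  set Se : E₀ ≃L[ℝ] E₀ := ContinuousLinearEquiv.ofUnit u with hSedef
  have hSe : ∀ z, Se z = z + D z := by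
    intro z
    show ((1 : E₀ →L[ℝ] E₀) - -D) z = z + D z
    rw [ContinuousLinearMap.sub_apply, ContinuousLinearMap.one_apply,
      ContinuousLinearMap.neg_apply, sub_neg_eq_add]
  have hSx : ∀ j, Se (x j) = y j := by
    intro j
    rw [hSe, hDx, add_sub_cancel]
  have hDz : ∀ z, ‖D z‖ ≤ θ * ‖z‖ := by
    intro z
    refine (D.le_opNorm z).trans ?_
    have := norm_nonneg z
    nlinarith
  have hShigh : ∀ z, ‖Se z‖ ≤ (1+θ)*‖z‖ := by
    intro z
    rw [hSe]
    refine (norm_add_le _ _).trans ?_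
    have := hDz z
    linarith
  have hSlow : ∀ z, (1-θ)*‖z‖ ≤ ‖Se z‖ := by
    intro z
    have h1 : ‖z‖ ≤ ‖Se z‖ + ‖D z‖ := by
      calc ‖z‖ = ‖(z + D z) - D z‖ := by rw [add_sub_cancel_right]
        _ ≤ ‖z + D z‖ + ‖D z‖ := norm_sub_le _ _
        _ = ‖Se z‖ + ‖D z‖ := by rw [hSe]
    have := hDz z
    linarith
  -- Se maps the block subspace into L
  have hML : ∀ z ∈ (Submodule.span ℝ (Set.range x)).topologicalClosure, Se z ∈ L := by
    have hKc : IsClosed ((L.comap ((Se : E₀ →L[ℝ] E₀) : E₀ →ₗ[ℝ] E₀)) : Set E₀) := by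
      show IsClosed (⇑Se ⁻¹' (L : Set E₀))
      exact hLc.preimage Se.continuous
    have hspan : Submodule.span ℝ (Set.range x) ≤
        L.comap ((Se : E₀ →L[ℝ] E₀) : E₀ →ₗ[ℝ] E₀) := by
      rw [Submodule.span_le]
      rintro _ ⟨j, rfl⟩
      show Se (x j) ∈ L
      rw [hSx]
      exact hyL j
    intro z hz
    exact Submodule.topologicalClosure_minimal _ hspan hKc hz
  -- the subspace N' = Se(N)
  set N' : Submodule ℝ E₀ := N.map (Se.toLinearEquiv : E₀ →ₗ[ℝ] E₀) with hN'def
  set eqN : N ≃ₗ[ℝ] N' := Se.toLinearEquiv.submoduleMap N with heqNdef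
  refine ⟨N', ?_, ⟨?_, ?_⟩, ?_⟩
  · rintro _ ⟨v, hv, rfl⟩
    exact hML v (hNM hv)
  · have hset : (N' : Set E₀) = ⇑Se '' (N : Set E₀) := by
      rw [hN'def, Submodule.map_coe]
      rfl
    rw [hset]
    exact (Se.toHomeomorph.isClosedMap) _ hNc
  · intro hfd
    haveI := hfd
    exact hNfd (Module.Finite.equiv eqN.symm)
  · refine ⟨eqN.symm.trans T₀, fun v => ?_⟩
    set w : N := eqN.symm v with hwdef
    have hvw : (v : E₀) = Se (w : E₀) := by
      have h1 : eqN w = v := eqN.apply_symm_apply v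
      have h2 : ((eqN w : N') : E₀) = Se (w : E₀) := by
        rw [heqNdef]
        exact Se.toLinearEquiv.submoduleMap_apply N w
      rw [← h1]
      exact h2
    have hTv : (eqN.symm.trans T₀) v = T₀ w := rfl
    have hnv : ‖v‖ = ‖Se (w : E₀)‖ := by
      rw [show ‖v‖ = ‖(v : E₀)‖ from rfl, hvw]
    have hnw : ‖w‖ = ‖(w : E₀)‖ := rfl
    have hw1 : (1-θ)*‖(w : E₀)‖ ≤ ‖v‖ := by rw [hnv]; exact hSlow _
    have hw2 : ‖v‖ ≤ (1+θ)*‖(w : E₀)‖ := by rw [hnv]; exact hShigh _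
    obtain ⟨hT1, hT2⟩ := hT₀ w
    rw [hnw] at hT1 hT2
    rw [hTv]
    have hnwnn : (0:ℝ) ≤ ‖(w : E₀)‖ := norm_nonneg _
    have hnvnn : (0:ℝ) ≤ ‖v‖ := norm_nonneg _
    constructor
    · -- lower bound
      have hv2 : ‖v‖ ≤ (1+δ)*‖(w : E₀)‖ := by
        have e0 : (0:ℝ) ≤ (δ - θ) * ‖(w : E₀)‖ :=
          mul_nonneg (by linarith only [hθδ]) hnwnn
        linarith only [hw2, e0]
      have h1 : (1/(c*(1+δ)))*‖v‖ ≤ (1/(c*(1+δ)))*((1+δ)*‖(w : E₀)‖) := by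
        refine mul_le_mul_of_nonneg_left hv2 ?_
        positivity
      have h2 : (1/(c*(1+δ)))*((1+δ)*‖(w : E₀)‖) = (1/c)*‖(w : E₀)‖ := by
        have hcne : c ≠ 0 := ne_of_gt hcpos
        have hdne : (1+δ) ≠ 0 := ne_of_gt hδ1
        field_simp
      linarith only [h1, h2, hT1]
    · -- upper bound
      have hv1 : ‖(w : E₀)‖ ≤ (1+δ)*‖v‖ := by
        have e1 : 1*‖(w : E₀)‖ ≤ ((1-θ)*(1+δ))*‖(w : E₀)‖ :=
          mul_le_mul_of_nonneg_right key1 hnwnn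
        have e2 : (1+δ)*((1-θ)*‖(w : E₀)‖) ≤ (1+δ)*‖v‖ :=
          mul_le_mul_of_nonneg_left hw1 hδ1.le
        linarith only [e1, e2]
      have h1 : ‖T₀ w‖ ≤ c * ((1+δ)*‖v‖) := by
        refine hT2.trans ?_
        exact mul_le_mul_of_nonneg_left hv1 hcpos.le
      calc ‖T₀ w‖ ≤ c * ((1+δ)*‖v‖) := h1
        _ = c*(1+δ)*‖v‖ := by ring
end
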